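/- Limit of the smoothed two-dimensional Gaussian integral: Let C = (c_{ij})_{i,j=1,2} be a real symmetric positive definite 2×2 matrix. Then lim_{ε → 0⁺} (1/(2ε)) · (2π)^{−1} (det C)^{−1/2} ∫_{−ε}^{ε} ∫_ℝ |v₂| · exp(−(1/2) ⟨C^{−1} v, v⟩) dv₂ dv₁ = (1/π) · √(c₁₁ c₂₂ − c₁₂²) / c₁₁, where v = (v₁, v₂). -/

import Mathlib

open MeasureTheory Real Matrix Filter

private lemma aux_ioi {b : ℝ} (hb : 0 < b) :
    ∫ x in Set.Ioi (0:ℝ), x * Real.exp (-b * x ^ 2) = (2 * b)⁻¹ := by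
  have hderiv : ∀ x ∈ Set.Ici (0:ℝ),
      HasDerivAt (fun x : ℝ => -(2 * b)⁻¹ * Real.exp (-b * x ^ 2))
        (x * Real.exp (-b * x ^ 2)) x := by
    intro x _
    have h1 : HasDerivAt (fun x : ℝ => -b * x ^ 2) (-b * (2 * x)) x := by
      simpa using ((hasDerivAt_pow 2 x).const_mul (-b))
    have h2 := (h1.exp).const_mul (-(2 * b)⁻¹)
    refine h2.congr_deriv ?_
    field_simp
  have htend : Tendsto (fun x : ℝ => -(2 * b)⁻¹ * Real.exp (-b * x ^ 2)) atTop (nhds 0) := by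
    have : Tendsto (fun x : ℝ => -b * x ^ 2) atTop atBot := by
      apply Tendsto.const_mul_atTop_of_neg (by linarith : -b < 0)
      exact tendsto_pow_atTop (by norm_num)
    simpa using (Real.tendsto_exp_atBot.comp this).const_mul (-(2 * b)⁻¹)
  have := integral_Ioi_of_hasDerivAt_of_tendsto' hderiv
    ((integrable_mul_exp_neg_mul_sq hb).integrableOn) htend
  simp only [neg_mul] at this ⊢
  rw [this]
  simp

private lemma aux_full {b : ℝ} (hb : 0 < b) :
    ∫ x : ℝ, |x| * Real.exp (-b * x ^ 2) = b⁻¹ := by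
  have h := integral_comp_abs (f := fun x : ℝ => x * Real.exp (-b * x ^ 2))
  simp only [sq_abs] at h
  rw [h, aux_ioi hb]
  field_simp

/-- Limit of the smoothed two-dimensional Gaussian integral. -/
theorem smoothed_gaussian_integral_limit (C : Matrix (Fin 2) (Fin 2) ℝ) (hC : C.PosDef) :
    Tendsto (fun ε : ℝ =>
        (1 / (2 * ε)) * ((2 * π)⁻¹ * (Real.sqrt C.det)⁻¹
          * ∫ v₁ in (-ε)..ε, ∫ v₂ : ℝ,
              |v₂| * Real.exp (-(1 / 2) * ((C⁻¹ *ᵥ ![v₁, v₂]) ⬝ᵥ ![v₁, v₂]))))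
      (nhdsWithin 0 (Set.Ioi 0))
      (nhds ((1 / π) * Real.sqrt (C 0 0 * C 1 1 - (C 0 1) ^ 2) / C 0 0)) := by
  have hM : (C⁻¹).PosDef := hC.inv
  set A := C⁻¹ 0 0 with hA_def
  set B := C⁻¹ 0 1 with hB_def
  set D := C⁻¹ 1 1 with hD_def
  have hsym : C⁻¹ 1 0 = B := by
    have := hM.1.apply 1 0
    simpa using this.symm
  have hdetM : (C⁻¹).det = A * D - B * B := by
    rw [Matrix.det_fin_two, hsym]
  have hdetMpos : 0 < A * D - B * B := hdetM ▸ hM.det_pos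
  have hA : 0 < A := by
    have := hM.dotProduct_mulVec_pos (x := ![1, 0]) (by
      intro h
      have := congrFun h 0
      simp at this)
    simpa [Matrix.mulVec, dotProduct, Fin.sum_univ_two] using this
  have hD : 0 < D := by nlinarith
  -- expansion of the quadratic form
  have hq : ∀ v₁ v₂ : ℝ, (C⁻¹ *ᵥ ![v₁, v₂]) ⬝ᵥ ![v₁, v₂]
      = A * v₁ ^ 2 + 2 * B * v₁ * v₂ + D * v₂ ^ 2 := by
    intro v₁ v₂
    simp [Matrix.mulVec, dotProduct, Fin.sum_univ_two, hsym]
    ring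
  set F : ℝ → ℝ := fun v₁ => ∫ v₂ : ℝ,
      |v₂| * Real.exp (-(1 / 2) * ((C⁻¹ *ᵥ ![v₁, v₂]) ⬝ᵥ ![v₁, v₂])) with hF_def
  have hFeq : F = fun v₁ => ∫ v₂ : ℝ,
      |v₂| * Real.exp (-(1 / 2) * (A * v₁ ^ 2 + 2 * B * v₁ * v₂ + D * v₂ ^ 2)) := by
    funext v₁; simp only [hF_def, hq]
  set c : ℝ := (A * D - B * B) / A with hc_def
  have hc : 0 < c := div_pos hdetMpos hA
  have hcA : c * A = A * D - B * B := div_mul_cancel₀ _ hA.ne'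
  have hbound : ∀ v₁ v₂ : ℝ,
      |v₂| * Real.exp (-(1 / 2) * (A * v₁ ^ 2 + 2 * B * v₁ * v₂ + D * v₂ ^ 2))
        ≤ |v₂| * Real.exp (-(c / 2) * v₂ ^ 2) := by
    intro v₁ v₂
    apply mul_le_mul_of_nonneg_left _ (abs_nonneg _)
    apply Real.exp_le_exp.mpr
    nlinarith [sq_nonneg (A * v₁ + B * v₂), sq_nonneg v₂, mul_pos hA hc]
  have hint_bound : Integrable (fun v₂ : ℝ => |v₂| * Real.exp (-(c / 2) * v₂ ^ 2)) := by
    have := (integrable_mul_exp_neg_mul_sq (show (0:ℝ) < c / 2 by linarith)).abs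
    refine this.congr ?_
    filter_upwards with x
    rw [abs_mul, abs_of_pos (Real.exp_pos _)]
  have hFcont : Continuous F := by
    rw [hFeq]
    apply continuous_of_dominated (bound := fun v₂ : ℝ => |v₂| * Real.exp (-(c / 2) * v₂ ^ 2))
    · intro v₁
      apply Continuous.aestronglyMeasurable
      fun_prop
    · intro v₁
      filter_upwards with v₂
      rw [Real.norm_eq_abs, abs_of_nonneg (by positivity)]
      exact hbound v₁ v₂
    · exact hint_bound
    · filter_upwards with v₂
      fun_prop
  have hF0 : F 0 = 2 / D := by
    rw [hFeq]
    simp only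
    have : ∀ v₂ : ℝ, |v₂| * Real.exp (-(1 / 2) * (A * 0 ^ 2 + 2 * B * 0 * v₂ + D * v₂ ^ 2))
        = |v₂| * Real.exp (-(D / 2) * v₂ ^ 2) := by
      intro v₂; ring_nf
    rw [show (fun v₂ : ℝ => |v₂| * Real.exp (-(1 / 2) * (A * 0 ^ 2 + 2 * B * 0 * v₂ + D * v₂ ^ 2)))
        = fun v₂ : ℝ => |v₂| * Real.exp (-(D / 2) * v₂ ^ 2) from funext this]
    rw [aux_full (by linarith : (0:ℝ) < D / 2)]
    rw [inv_div]
  -- the derivative argument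
  set H : ℝ → ℝ := fun t => ∫ x in (0:ℝ)..t, F x with hH_def
  have hH : HasDerivAt H (F 0) 0 := (hFcont.integral_hasStrictDerivAt 0 0).hasDerivAt
  have hHneg : HasDerivAt (fun t => H (-t)) (F 0 * (-1)) 0 := by
    have h0 : HasDerivAt (fun u => ∫ x in (0:ℝ)..u, F x) (F 0) (-0) := by
      rw [neg_zero]; exact (hFcont.integral_hasStrictDerivAt 0 0).hasDerivAt
    have := h0.comp 0 (hasDerivAt_neg 0)
    exact this
  have hG : HasDerivAt (fun t => H t - H (-t)) (2 * F 0) 0 := by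
    have := hH.sub hHneg
    refine this.congr_deriv ?_
    ring
  have hGsplit : ∀ t : ℝ, (∫ x in (-t)..t, F x) = H t - H (-t) := by
    intro t
    have h1 : (∫ x in (-t)..(0:ℝ), F x) + ∫ x in (0:ℝ)..t, F x = ∫ x in (-t)..t, F x :=
      intervalIntegral.integral_add_adjacent_intervals
        (hFcont.intervalIntegrable _ _) (hFcont.intervalIntegrable _ _)
    rw [← h1, intervalIntegral.integral_symm]
    simp only [hH_def]
    ring
  have hslope : Tendsto (fun ε => ((H ε - H (-ε)) - (H 0 - H (-0))) / (ε - 0))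
      (nhdsWithin 0 (Set.Ioi 0)) (nhds (2 * F 0)) := by
    have := hasDerivAt_iff_tendsto_slope.mp hG
    have h2 := this.mono_left (nhdsWithin_mono 0 (by
      intro x hx
      simp only [Set.mem_compl_iff, Set.mem_singleton_iff]
      exact ne_of_gt hx))
    refine h2.congr ?_
    intro ε
    simp [slope_def_field]
  set k : ℝ := (2 * π)⁻¹ * (Real.sqrt C.det)⁻¹ with hk_def
  have hmain : Tendsto (fun ε : ℝ => (1 / (2 * ε)) * (k * ∫ x in (-ε)..ε, F x))
      (nhdsWithin 0 (Set.Ioi 0)) (nhds (k * F 0)) := by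
    have h3 : Tendsto (fun ε => k * (((H ε - H (-ε)) - (H 0 - H (-0))) / (ε - 0)) / 2)
        (nhdsWithin 0 (Set.Ioi 0)) (nhds (k * (2 * F 0) / 2)) :=
      (hslope.const_mul k).div_const 2
    have heq : k * (2 * F 0) / 2 = k * F 0 := by ring
    rw [heq] at h3
    refine h3.congr ?_
    intro ε
    rw [hGsplit ε]
    have hH0 : H 0 = 0 := intervalIntegral.integral_same
    rw [hH0]
    simp only [neg_zero, sub_zero]
    rw [hH0]
    ring
  -- final: identify the limit value
  have hCsym : C 1 0 = C 0 1 := by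
    have := hC.1.apply 1 0
    simpa using this.symm
  have hdetC : C.det = C 0 0 * C 1 1 - (C 0 1) ^ 2 := by
    rw [Matrix.det_fin_two, hCsym]; ring
  have hdetCpos : 0 < C.det := hC.det_pos
  have hC00 : 0 < C 0 0 := by
    have := hC.dotProduct_mulVec_pos (x := ![1, 0]) (by
      intro h
      have := congrFun h 0
      simp at this)
    simpa [Matrix.mulVec, dotProduct, Fin.sum_univ_two] using this
  have hDval : D = C 0 0 / C.det := by
    rw [hD_def, Matrix.inv_def, Matrix.adjugate_fin_two]
    simp [Ring.inverse_eq_inv']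
    rw [div_eq_inv_mul]
  have hfinal : k * F 0 = (1 / π) * Real.sqrt (C 0 0 * C 1 1 - (C 0 1) ^ 2) / C 0 0 := by
    rw [hF0, hDval, hk_def, ← hdetC]
    have hs : Real.sqrt C.det * Real.sqrt C.det = C.det := Real.mul_self_sqrt hdetCpos.le
    have hspos : 0 < Real.sqrt C.det := Real.sqrt_pos.mpr hdetCpos
    have hπ : (0:ℝ) < π := Real.pi_pos
    field_simp
    ring_nf
    linear_combination (-1) * hs
  rw [← hfinal]
  exact hmain
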